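/- Let a¹,…,aⁿ ∈ R^d, τ > 0, and initial points v¹_{-1},…,vⁿ_{-1} ∈ R^d. Define vⁱ_k = vⁱ_{k-1} + clip_τ(aⁱ − vⁱ_{k-1}) for each i and k ≥ 0, and let v_k = (1/n)∑ᵢ vⁱ_k and a = (1/n)∑ᵢ aⁱ. Then for all k ≥ 0, ‖v_k − a‖ ≤ (1/n)∑ᵢ max{0, ‖vⁱ_{-1} − aⁱ‖ − (k+1)τ}. In particular, if ‖vⁱ_{-1} − aⁱ‖ ≤ τ for all i, then v_0 = a. -/

import Mathlib

noncomputable def clip {E : Type*} [NormedAddCommGroup E] [NormedSpace ℝ E]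
    (τ : ℝ) (x : E) : E := if ‖x‖ ≤ τ then x else (τ / ‖x‖) • x

lemma clip_step {E : Type*} [NormedAddCommGroup E] [NormedSpace ℝ E]
    (τ : ℝ) (hτ : 0 < τ) (w a : E) :
    ‖(w + clip τ (a - w)) - a‖ = max 0 (‖w - a‖ - τ) := by
  have hna : ‖w - a‖ = ‖a - w‖ := by rw [norm_sub_rev]
  unfold clip
  by_cases h : ‖a - w‖ ≤ τ
  · simp [h, hna]
  · push_neg at h
    have hpos : 0 < ‖a - w‖ := lt_trans hτ h
    rw [if_neg (not_le.mpr h)]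
    have : w + (τ / ‖a - w‖) • (a - w) - a = (τ / ‖a - w‖ - 1) • (a - w) := by
      rw [sub_smul, one_smul]; abel
    rw [this, norm_smul, Real.norm_eq_abs, abs_of_nonpos (by
      rw [sub_nonpos, div_le_one hpos]; exact h.le)]
    rw [hna]
    rw [max_eq_right (by linarith)]
    field_simp
    ring

theorem clip21_avg {d n : ℕ} (hn : 0 < n) (τ : ℝ) (hτ : 0 < τ)
    (a vinit : Fin n → EuclideanSpace ℝ (Fin d))
    (v : ℕ → Fin n → EuclideanSpace ℝ (Fin d))
    (h0 : ∀ i, v 0 i = vinit i + clip τ (a i - vinit i))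
    (hrec : ∀ (k : ℕ) (i : Fin n), v (k + 1) i = v k i + clip τ (a i - v k i)) :
    (∀ k : ℕ, ‖(n : ℝ)⁻¹ • ∑ i, v k i - (n : ℝ)⁻¹ • ∑ i, a i‖ ≤
      (n : ℝ)⁻¹ * ∑ i, max 0 (‖vinit i - a i‖ - (k + 1) * τ)) ∧
    ((∀ i, ‖vinit i - a i‖ ≤ τ) →
      (n : ℝ)⁻¹ • ∑ i, v 0 i = (n : ℝ)⁻¹ • ∑ i, a i) := by
  have key : ∀ k i, ‖v k i - a i‖ = max 0 (‖vinit i - a i‖ - (k + 1) * τ) := by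
    intro k
    induction k with
    | zero =>
      intro i
      rw [h0 i, clip_step τ hτ]
      norm_num
    | succ k ih =>
      intro i
      rw [hrec k i, clip_step τ hτ, ih i]
      rcases le_total (‖vinit i - a i‖ - (k + 1) * τ) 0 with h | h
      · rw [max_eq_left h, max_eq_left (by linarith), max_eq_left (by push_cast; nlinarith)]
      · rw [max_eq_right h]
        push_cast
        rcases le_total (‖vinit i - a i‖ - (k + 1 + 1) * τ) 0 with h2 | h2
        · rw [max_eq_left (by linarith), max_eq_left h2]
        · rw [max_eq_right (by linarith), max_eq_right h2]; ring
  have bound : ∀ k : ℕ, ‖(n : ℝ)⁻¹ • ∑ i, v k i - (n : ℝ)⁻¹ • ∑ i, a i‖ ≤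
      (n : ℝ)⁻¹ * ∑ i, max 0 (‖vinit i - a i‖ - (k + 1) * τ) := by
    intro k
    rw [← smul_sub, ← Finset.sum_sub_distrib, norm_smul, Real.norm_eq_abs,
      abs_of_nonneg (by positivity)]
    refine mul_le_mul_of_nonneg_left ?_ (by positivity)
    calc ‖∑ i, (v k i - a i)‖ ≤ ∑ i, ‖v k i - a i‖ := norm_sum_le _ _
      _ = _ := by simp_rw [key k]
  refine ⟨bound, fun h => ?_⟩
  have := bound 0
  have heq : ∀ i, max 0 (‖vinit i - a i‖ - (((0:ℕ):ℝ) + 1) * τ) = 0 := by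
    intro i; rw [max_eq_left (by have := h i; push_cast; linarith)]
  simp_rw [heq, Finset.sum_const_zero, mul_zero] at this
  have := norm_le_zero_iff.mp this
  exact sub_eq_zero.mp this
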